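/- Let N ≥ 2 and for 0 ≤ m ≤ N−1 set a_m = ∏_{j=1}^{m} 4·sin²(πj/N). Then lim_{N→∞} (1/N) · log( max_{0 ≤ m ≤ N−1} a_m ) = 2·∫_0^{5/6} log(2·sin(πt)) dt. -/

import Mathlib

open Real Finset Filter MeasureTheory Set

noncomputable def lf (t : ℝ) : ℝ := Real.log (2 * Real.sin (Real.pi * t))

noncomputable def Fp (x : ℝ) : ℝ := ∫ t in (0:ℝ)..x, lf t

lemma s_mono {x y : ℝ} (hx : 0 ≤ x) (hxy : x ≤ y) (hy : y ≤ 1/2) :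
    Real.sin (π * x) ≤ Real.sin (π * y) := by
  have hπ := Real.pi_pos
  refine Real.strictMonoOn_sin.monotoneOn ⟨by nlinarith, by nlinarith⟩
    ⟨by nlinarith, by nlinarith⟩ (by nlinarith)

lemma sin_pos01 {t : ℝ} (h0 : 0 < t) (h1 : t < 1) : 0 < Real.sin (π * t) :=
  Real.sin_pos_of_pos_of_lt_pi (by positivity) (by nlinarith [Real.pi_pos])

lemma lf_mono {x y : ℝ} (hx : 0 < x) (hxy : x ≤ y) (hy : y ≤ 1/2) : lf x ≤ lf y := by
  have h1 : (0:ℝ) < 2 * Real.sin (π * x) := by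
    have := sin_pos01 hx (by linarith); linarith
  exact Real.log_le_log h1 (by have := s_mono hx.le hxy hy; linarith)

lemma lf_anti {x y : ℝ} (hx : 1/2 ≤ x) (hxy : x ≤ y) (hy : y < 1) : lf y ≤ lf x := by
  have h1 : (0:ℝ) < 2 * Real.sin (π * y) := by
    have := sin_pos01 (by linarith : (0:ℝ) < y) hy; linarith
  have hs : Real.sin (π * y) ≤ Real.sin (π * x) := by
    have h := s_mono (x := 1 - y) (y := 1 - x) (by linarith) (by linarith) (by linarith)
    have e1 : π * (1 - y) = π - π * y := by ring
    have e2 : π * (1 - x) = π - π * x := by ring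
    rwa [e1, e2, Real.sin_pi_sub, Real.sin_pi_sub] at h
  exact Real.log_le_log h1 (by linarith)

lemma lf_le_log2 {t : ℝ} : lf t ≤ Real.log 2 := by
  unfold lf
  rw [← Real.log_abs]
  rcases eq_or_lt_of_le (abs_nonneg (2 * Real.sin (π * t))) with h | h
  · rw [← h, Real.log_zero]; exact Real.log_nonneg (by norm_num)
  · refine Real.log_le_log h (abs_le.mpr ⟨?_, ?_⟩)
    · nlinarith [Real.neg_one_le_sin (π * t)]
    · nlinarith [Real.sin_le_one (π * t)]

lemma sin_ge_three_mul {t : ℝ} (h0 : 0 ≤ t) (h1 : t ≤ 1/6) : 3 * t ≤ Real.sin (π * t) := by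
  have hπ := Real.pi_pos
  have hc := strictConcaveOn_sin_Icc.concaveOn
  have h := hc.2 (show (0:ℝ) ∈ Set.Icc 0 π from ⟨le_rfl, hπ.le⟩)
    (show π/6 ∈ Set.Icc 0 π from ⟨by positivity, by linarith⟩)
    (show (0:ℝ) ≤ 1 - 6*t by linarith) (show (0:ℝ) ≤ 6*t by linarith) (by ring)
  simp only [smul_eq_mul, mul_zero, Real.sin_zero, zero_add, Real.sin_pi_div_six] at h
  rw [show (6:ℝ) * t * (π/6) = π * t by ring] at h
  linarith

lemma sin_ge_two_mul {t : ℝ} (h0 : 0 ≤ t) (h1 : t ≤ 1/2) : 2 * t ≤ Real.sin (π * t) := by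
  have := Real.le_sin_mul (x := 2*t) (by linarith) (by linarith)
  rw [show π / 2 * (2 * t) = π * t by ring] at this; linarith

lemma lf_meas : Measurable lf :=
  Real.measurable_log.comp
    (((Real.continuous_sin.comp (continuous_const.mul continuous_id)).measurable).const_mul 2)

lemma abs_lf_le {u : ℝ} (h0 : 0 < u) (h1 : u ≤ 1/2) :
    |lf u| ≤ Real.log 8 + 2 * u ^ (-(1/2) : ℝ) := by
  have h4 : 4 * u ≤ 2 * Real.sin (π * u) := by have := sin_ge_two_mul h0.le h1; linarith
  have h8 : 2 * Real.sin (π * u) ≤ 8 * u := by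
    have hs : Real.sin (π * u) ≤ π * u := Real.sin_le (by positivity)
    nlinarith [Real.pi_le_four]
  have hrp : (0:ℝ) < u ^ (-(1/2) : ℝ) := Real.rpow_pos_of_pos h0 _
  have hlogu : -Real.log u ≤ 2 * u ^ (-(1/2) : ℝ) := by
    have e : Real.log (u ^ (-(1/2) : ℝ)) = -(1/2) * Real.log u := Real.log_rpow h0 _
    have := Real.log_le_sub_one_of_pos hrp
    rw [e] at this; linarith
  have hlogu0 : Real.log u ≤ 0 := Real.log_nonpos h0.le (by linarith)
  rw [abs_le]
  constructor
  · have hl : Real.log (4 * u) ≤ lf u :=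
      Real.log_le_log (by linarith) h4
    have : Real.log (4 * u) = Real.log 4 + Real.log u := Real.log_mul (by norm_num) h0.ne'
    have h48 : Real.log 4 ≤ Real.log 8 := Real.log_le_log (by norm_num) (by norm_num)
    have hlog4 : (0:ℝ) ≤ Real.log 4 := Real.log_nonneg (by norm_num)
    nlinarith
  · have hu : lf u ≤ Real.log (8 * u) := Real.log_le_log (by linarith) h8
    have : Real.log (8 * u) = Real.log 8 + Real.log u := Real.log_mul (by norm_num) h0.ne'
    nlinarith

lemma lf_symm (t : ℝ) : lf (1 - t) = lf t := by
  unfold lf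
  rw [show π * (1 - t) = π - π * t by ring, Real.sin_pi_sub]

lemma lf_int01 : IntegrableOn lf (Set.Ioc 0 1) volume := by
  have hdom : IntervalIntegrable
      (fun t : ℝ => Real.log 8 + 2 * t ^ (-(1/2) : ℝ) + 2 * (1-t) ^ (-(1/2) : ℝ)) volume 0 1 := by
    have h1 : IntervalIntegrable (fun t : ℝ => t ^ (-(1/2) : ℝ)) volume 0 1 :=
      intervalIntegral.intervalIntegrable_rpow' (by norm_num)
    have h2 : IntervalIntegrable (fun t : ℝ => (1-t) ^ (-(1/2) : ℝ)) volume 0 1 := by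
      have := (h1.comp_sub_left 1).symm
      simpa using this
    exact (intervalIntegrable_const.add (h1.const_mul 2)).add (h2.const_mul 2)
  have hdom' : IntegrableOn
      (fun t : ℝ => Real.log 8 + 2 * t ^ (-(1/2) : ℝ) + 2 * (1-t) ^ (-(1/2) : ℝ))
      (Set.Ioc 0 1) volume :=
    (intervalIntegrable_iff_integrableOn_Ioc_of_le (by norm_num)).mp hdom
  refine hdom'.mono' lf_meas.aestronglyMeasurable ?_
  filter_upwards [ae_restrict_mem measurableSet_Ioc] with t ht
  have hrp1 : (0:ℝ) ≤ t ^ (-(1/2) : ℝ) := Real.rpow_nonneg ht.1.le _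
  have hrp2 : (0:ℝ) ≤ (1-t) ^ (-(1/2) : ℝ) := Real.rpow_nonneg (by linarith [ht.2]) _
  rw [Real.norm_eq_abs]
  rcases le_or_gt t (1/2) with h | h
  · have := abs_lf_le ht.1 h; linarith
  · rcases eq_or_lt_of_le ht.2 with h1 | h1
    · have : lf t = 0 := by
        unfold lf; rw [h1]; simp
      rw [this, abs_zero]
      have : (0:ℝ) ≤ Real.log 8 := Real.log_nonneg (by norm_num)
      linarith
    · have := abs_lf_le (u := 1 - t) (by linarith) (by linarith)
      rw [lf_symm] at this
      linarith

lemma lf_intab {a b : ℝ} (ha : 0 ≤ a) (ha' : a ≤ 1) (hb : 0 ≤ b) (hb' : b ≤ 1) :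
    IntervalIntegrable lf volume a b := by
  have h1 : IntervalIntegrable lf volume 0 1 :=
    (intervalIntegrable_iff_integrableOn_Ioc_of_le (by norm_num)).mpr lf_int01
  refine h1.mono_set ?_
  rw [Set.uIcc_of_le (show (0:ℝ) ≤ 1 by norm_num)]
  exact Set.uIcc_subset_Icc ⟨ha, ha'⟩ ⟨hb, hb'⟩

lemma ae_Ioo_restrict {a b : ℝ} {p : ℝ → Prop} (h : ∀ t ∈ Set.Ioo a b, p t) :
    ∀ᵐ t ∂(volume.restrict (Set.Icc a b)), p t := by
  refine (ae_restrict_iff' measurableSet_Icc).2 ?_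
  have hna : ∀ᵐ t : ℝ ∂volume, t ≠ a := by
    refine MeasureTheory.ae_iff.2 ?_
    simp only [not_not, Set.setOf_eq_eq_singleton]
    exact Real.volume_singleton
  have hnb : ∀ᵐ t : ℝ ∂volume, t ≠ b := by
    refine MeasureTheory.ae_iff.2 ?_
    simp only [not_not, Set.setOf_eq_eq_singleton]
    exact Real.volume_singleton
  filter_upwards [hna, hnb] with t h1 h2 ht
  exact h t ⟨lt_of_le_of_ne ht.1 (Ne.symm h1), lt_of_le_of_ne ht.2 h2⟩

lemma int_le_c {a b c : ℝ} (hab : a ≤ b) (hi : IntervalIntegrable lf volume a b)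
    (h : ∀ t ∈ Set.Ioo a b, lf t ≤ c) : ∫ t in a..b, lf t ≤ (b - a) * c := by
  have h2 := intervalIntegral.integral_mono_ae_restrict hab hi
    (intervalIntegrable_const (c := c)) (ae_Ioo_restrict h)
  rwa [intervalIntegral.integral_const, smul_eq_mul] at h2

lemma c_le_int {a b c : ℝ} (hab : a ≤ b) (hi : IntervalIntegrable lf volume a b)
    (h : ∀ t ∈ Set.Ioo a b, c ≤ lf t) : (b - a) * c ≤ ∫ t in a..b, lf t := by
  have h2 := intervalIntegral.integral_mono_ae_restrict hab
    (intervalIntegrable_const (c := c)) hi (ae_Ioo_restrict h)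
  rwa [intervalIntegral.integral_const, smul_eq_mul] at h2

lemma Fp_diff {a b : ℝ} (ha : 0 ≤ a) (hab : a ≤ b) (hb : b ≤ 1) :
    Fp b - Fp a = ∫ t in a..b, lf t := by
  have h := intervalIntegral.integral_add_adjacent_intervals
    (lf_intab le_rfl (by norm_num) ha (by linarith))
    (lf_intab ha (by linarith) (by linarith) hb)
  unfold Fp
  linarith

lemma sin_ge_half {t : ℝ} (h1 : 1/6 ≤ t) (h2 : t ≤ 1/2) : 1/2 ≤ Real.sin (π * t) := by
  have := s_mono (x := 1/6) (y := t) (by norm_num) h1 h2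
  rw [show π * (1/6:ℝ) = π/6 by ring, Real.sin_pi_div_six] at this; linarith

lemma lf_nonneg {t : ℝ} (h1 : 1/6 ≤ t) (h2 : t ≤ 5/6) : 0 ≤ lf t := by
  rcases le_or_gt t (1/2) with h | h
  · exact Real.log_nonneg (by have := sin_ge_half h1 h; linarith)
  · rw [← lf_symm]
    exact Real.log_nonneg
      (by have := sin_ge_half (t := 1-t) (by linarith) (by linarith); linarith)

lemma lf_nonpos_left {t : ℝ} (h0 : 0 ≤ t) (h1 : t ≤ 1/6) : lf t ≤ 0 := by
  have hs : Real.sin (π*t) ≤ 1/2 := by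
    have := s_mono h0 h1 (by norm_num)
    rw [show π*(1/6:ℝ) = π/6 by ring, Real.sin_pi_div_six] at this; linarith
  have hs0 : 0 ≤ Real.sin (π*t) := by have := sin_ge_two_mul h0 (by linarith); linarith
  exact Real.log_nonpos (by linarith) (by linarith)

lemma lf_nonpos_right {t : ℝ} (h0 : 5/6 ≤ t) (h1 : t ≤ 1) : lf t ≤ 0 := by
  rw [← lf_symm]
  exact lf_nonpos_left (by linarith) (by linarith)

lemma numeric : (2:ℝ)/9 ≤ Real.log 2 / 12 + Real.log 3 / 6 := by
  have h1 : Real.exp 1 ≤ 2.7182818286 := Real.exp_one_lt_d9.le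
  have h8 : Real.exp 8 = (Real.exp 1)^8 := by
    rw [← Real.exp_nat_mul]; norm_num
  have hexp : Real.exp 8 ≤ 5832 := by
    rw [h8]
    calc (Real.exp 1)^8 ≤ 2.7182818286^8 :=
          pow_le_pow_left₀ (Real.exp_pos 1).le h1 8
      _ ≤ 5832 := by norm_num
  have hlog : (8:ℝ) ≤ Real.log 5832 := (Real.le_log_iff_exp_le (by norm_num)).2 hexp
  have he : Real.log 5832 = 3 * Real.log 2 + 6 * Real.log 3 := by
    rw [show (5832:ℝ) = 2^3 * 3^6 by norm_num,
      Real.log_mul (by norm_num) (by norm_num), Real.log_pow, Real.log_pow]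
    push_cast; ring
  linarith

lemma lf_quarter : lf (1/4) = Real.log 2 / 2 := by
  unfold lf
  rw [show π * (1/4:ℝ) = π/4 by ring, Real.sin_pi_div_four,
    show (2:ℝ) * (Real.sqrt 2/2) = Real.sqrt 2 by ring, Real.log_sqrt (by norm_num)]

lemma lf_third : lf (1/3) = Real.log 3 / 2 := by
  unfold lf
  rw [show π * (1/3:ℝ) = π/3 by ring, Real.sin_pi_div_three,
    show (2:ℝ) * (Real.sqrt 3/2) = Real.sqrt 3 by ring, Real.log_sqrt (by norm_num)]

lemma lf_twothirds : lf (2/3) = Real.log 3 / 2 := by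
  rw [show (2:ℝ)/3 = 1 - 1/3 by norm_num, lf_symm]; exact lf_third

lemma lf_threequarters : lf (3/4) = Real.log 2 / 2 := by
  rw [show (3:ℝ)/4 = 1 - 1/4 by norm_num, lf_symm]; exact lf_quarter

lemma E2 : (2:ℝ)/9 ≤ ∫ t in (1/6:ℝ)..(5/6:ℝ), lf t := by
  have i1 : (1:ℝ)/6 ≤ 1 := by norm_num
  have b1 : (0:ℝ) ≤ ∫ t in (1/6:ℝ)..(1/4:ℝ), lf t := by
    have := c_le_int (a := 1/6) (b := 1/4) (c := 0) (by norm_num)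
      (lf_intab (by norm_num) (by norm_num) (by norm_num) (by norm_num))
      (fun t ht => lf_nonneg (le_of_lt ht.1) (by linarith [ht.2]))
    linarith
  have b2 : (1/12:ℝ) * (Real.log 2 / 2) ≤ ∫ t in (1/4:ℝ)..(1/3:ℝ), lf t := by
    have := c_le_int (a := 1/4) (b := 1/3) (c := Real.log 2 / 2) (by norm_num)
      (lf_intab (by norm_num) (by norm_num) (by norm_num) (by norm_num))
      (fun t ht => by rw [← lf_quarter]; exact lf_mono (by norm_num) ht.1.le (by linarith [ht.2]))
    linarith
  have b3 : (1/6:ℝ) * (Real.log 3 / 2) ≤ ∫ t in (1/3:ℝ)..(1/2:ℝ), lf t := by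
    have := c_le_int (a := 1/3) (b := 1/2) (c := Real.log 3 / 2) (by norm_num)
      (lf_intab (by norm_num) (by norm_num) (by norm_num) (by norm_num))
      (fun t ht => by rw [← lf_third]; exact lf_mono (by norm_num) ht.1.le (by linarith [ht.2]))
    linarith
  have b4 : (1/6:ℝ) * (Real.log 3 / 2) ≤ ∫ t in (1/2:ℝ)..(2/3:ℝ), lf t := by
    have := c_le_int (a := 1/2) (b := 2/3) (c := Real.log 3 / 2) (by norm_num)
      (lf_intab (by norm_num) (by norm_num) (by norm_num) (by norm_num))
      (fun t ht => by rw [← lf_twothirds]; exact lf_anti ht.1.le (le_of_lt ht.2) (by norm_num))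
    linarith
  have b5 : (1/12:ℝ) * (Real.log 2 / 2) ≤ ∫ t in (2/3:ℝ)..(3/4:ℝ), lf t := by
    have := c_le_int (a := 2/3) (b := 3/4) (c := Real.log 2 / 2) (by norm_num)
      (lf_intab (by norm_num) (by norm_num) (by norm_num) (by norm_num))
      (fun t ht => by rw [← lf_threequarters]; exact lf_anti (by linarith [ht.1]) (le_of_lt ht.2) (by norm_num))
    linarith
  have b6 : (0:ℝ) ≤ ∫ t in (3/4:ℝ)..(5/6:ℝ), lf t := by
    have := c_le_int (a := 3/4) (b := 5/6) (c := 0) (by norm_num)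
      (lf_intab (by norm_num) (by norm_num) (by norm_num) (by norm_num))
      (fun t ht => lf_nonneg (by linarith [ht.1]) ht.2.le)
    linarith
  have ii : ∀ a b : ℝ, 0 ≤ a → a ≤ 1 → 0 ≤ b → b ≤ 1 → IntervalIntegrable lf volume a b :=
    fun a b ha ha' hb hb' => lf_intab ha ha' hb hb'
  have s1 := intervalIntegral.integral_add_adjacent_intervals
    (ii (1/6) (1/4) (by norm_num) (by norm_num) (by norm_num) (by norm_num))
    (ii (1/4) (1/3) (by norm_num) (by norm_num) (by norm_num) (by norm_num))
  have s2 := intervalIntegral.integral_add_adjacent_intervals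
    (ii (1/6) (1/3) (by norm_num) (by norm_num) (by norm_num) (by norm_num))
    (ii (1/3) (1/2) (by norm_num) (by norm_num) (by norm_num) (by norm_num))
  have s3 := intervalIntegral.integral_add_adjacent_intervals
    (ii (1/6) (1/2) (by norm_num) (by norm_num) (by norm_num) (by norm_num))
    (ii (1/2) (2/3) (by norm_num) (by norm_num) (by norm_num) (by norm_num))
  have s4 := intervalIntegral.integral_add_adjacent_intervals
    (ii (1/6) (2/3) (by norm_num) (by norm_num) (by norm_num) (by norm_num))
    (ii (2/3) (3/4) (by norm_num) (by norm_num) (by norm_num) (by norm_num))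
  have s5 := intervalIntegral.integral_add_adjacent_intervals
    (ii (1/6) (3/4) (by norm_num) (by norm_num) (by norm_num) (by norm_num))
    (ii (3/4) (5/6) (by norm_num) (by norm_num) (by norm_num) (by norm_num))
  have hnum := numeric
  linarith

lemma E1 : -(2/9:ℝ) ≤ ∫ t in (0:ℝ)..(1/6:ℝ), lf t := by
  have hint : IntervalIntegrable lf volume 0 (1/6) :=
    lf_intab (by norm_num) (by norm_num) (by norm_num) (by norm_num)
  have hg : IntervalIntegrable
      (fun t : ℝ => 4 - 4 * 6 ^ (-(1/4):ℝ) * t ^ (-(1/4):ℝ)) volume 0 (1/6) :=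
    intervalIntegrable_const.sub
      ((intervalIntegral.intervalIntegrable_rpow' (by norm_num)).const_mul _)
  have hle : (fun t : ℝ => 4 - 4 * 6 ^ (-(1/4):ℝ) * t ^ (-(1/4):ℝ))
      ≤ᵐ[volume.restrict (Set.Icc (0:ℝ) (1/6))] lf := by
    apply ae_Ioo_restrict
      (p := fun t => 4 - 4 * 6 ^ (-(1/4):ℝ) * t ^ (-(1/4):ℝ) ≤ lf t)
    intro t ht
    have h6 : 6 * t ≤ 2 * Real.sin (π * t) := by
      have := sin_ge_three_mul ht.1.le (le_of_lt ht.2); linarith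
    have hpos : (0:ℝ) < 6 * t := by linarith [ht.1]
    have hl1 : Real.log (6*t) ≤ lf t := Real.log_le_log hpos h6
    have e : Real.log ((6*t) ^ (-(1/4):ℝ)) = -(1/4) * Real.log (6*t) :=
      Real.log_rpow hpos _
    have h2 := Real.log_le_sub_one_of_pos (Real.rpow_pos_of_pos hpos (-(1/4):ℝ))
    rw [e] at h2
    have erp : (6*t) ^ (-(1/4):ℝ) = 6 ^ (-(1/4):ℝ) * t ^ (-(1/4):ℝ) :=
      Real.mul_rpow (by norm_num) ht.1.le
    rw [erp] at h2
    linarith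
  have hcomp := intervalIntegral.integral_mono_ae_restrict
    (by norm_num : (0:ℝ) ≤ 1/6) hg hint hle
  have hval : ∫ t in (0:ℝ)..(1/6:ℝ), (4 - 4 * 6 ^ (-(1/4):ℝ) * t ^ (-(1/4):ℝ)) = -(2/9:ℝ) := by
    rw [intervalIntegral.integral_sub intervalIntegrable_const
      ((intervalIntegral.intervalIntegrable_rpow' (by norm_num)).const_mul _),
      intervalIntegral.integral_const_mul,
      integral_rpow (Or.inl (by norm_num)),
      intervalIntegral.integral_const]
    have h0 : (0:ℝ) ^ (-(1/4) + 1 : ℝ) = 0 := Real.zero_rpow (by norm_num)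
    rw [h0]
    have hc : ((1/6:ℝ) ^ (-(1/4) + 1 : ℝ)) = 6 ^ (-(3/4):ℝ) := by
      rw [show (-(1/4) + 1 : ℝ) = 3/4 by norm_num, show (1/6:ℝ) = 6⁻¹ by norm_num,
        Real.inv_rpow (by norm_num : (0:ℝ) ≤ 6), ← Real.rpow_neg (by norm_num : (0:ℝ) ≤ 6)]
    have hprod : (6:ℝ) ^ (-(1/4):ℝ) * 6 ^ (-(3/4):ℝ) = 6⁻¹ := by
      rw [← Real.rpow_add (by norm_num : (0:ℝ) < 6),
        show (-(1/4):ℝ) + -(3/4) = -1 by norm_num, Real.rpow_neg_one]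
    rw [hc, smul_eq_mul]
    linear_combination (-16/3 : ℝ) * hprod
  rw [hval] at hcomp
  exact hcomp

lemma Fp_zero : Fp 0 = 0 := intervalIntegral.integral_same

lemma log2_nonneg : (0:ℝ) ≤ Real.log 2 := Real.log_nonneg (by norm_num)

lemma Fmax {x : ℝ} (h0 : 0 ≤ x) (h1 : x ≤ 1) : Fp x ≤ Fp (5/6) := by
  have hd1 : Fp (1/6) - Fp 0 = ∫ t in (0:ℝ)..(1/6:ℝ), lf t :=
    Fp_diff le_rfl (by norm_num) (by norm_num)
  have hd2 : Fp (5/6) - Fp (1/6) = ∫ t in (1/6:ℝ)..(5/6:ℝ), lf t :=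
    Fp_diff (by norm_num) (by norm_num) (by norm_num)
  have hE1 := E1
  have hE2 := E2
  rw [Fp_zero] at hd1
  have hF56 : (0:ℝ) ≤ Fp (5/6) := by linarith
  rcases le_or_gt x (1/6) with h | h
  · have hFx : Fp x ≤ 0 := by
      have hi := int_le_c (a := 0) (b := x) (c := 0) h0
        (lf_intab le_rfl (by norm_num) h0 h1)
        (fun t ht => lf_nonpos_left ht.1.le (by linarith [ht.2]))
      have hd := Fp_diff (a := 0) (b := x) le_rfl h0 h1
      rw [Fp_zero] at hd
      linarith
    linarith
  · rcases le_or_gt x (5/6) with h2 | h2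
    · have hd : Fp (5/6) - Fp x = ∫ t in x..(5/6:ℝ), lf t :=
        Fp_diff (by linarith) h2 (by norm_num)
      have hi := c_le_int (a := x) (b := 5/6) (c := 0) h2
        (lf_intab (by linarith) h1 (by norm_num) (by norm_num))
        (fun t ht => lf_nonneg (by linarith [ht.1]) ht.2.le)
      nlinarith
    · have hd : Fp x - Fp (5/6) = ∫ t in (5/6:ℝ)..x, lf t :=
        Fp_diff (by norm_num) h2.le h1
      have hi := int_le_c (a := 5/6) (b := x) (c := 0) h2.le
        (lf_intab (by norm_num) (by norm_num) (by linarith) h1)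
        (fun t ht => lf_nonpos_right ht.1.le (by linarith [ht.2]))
      nlinarith

section Steps

variable {N : ℕ} (hN0 : (0:ℝ) < N)
include hN0

lemma step_upR {x : ℝ} (hx0 : 0 < x) (hx : x + 1/N ≤ 1/2) :
    lf x ≤ N * (Fp (x + 1/N) - Fp x) := by
  have hNe : (N:ℝ) ≠ 0 := ne_of_gt hN0
  have h1N : (0:ℝ) < 1/N := by positivity
  have hd : Fp (x + 1/N) - Fp x = ∫ t in x..(x + 1/N), lf t :=
    Fp_diff hx0.le (by linarith) (by linarith)
  have hc := c_le_int (a := x) (b := x + 1/N) (c := lf x) (by linarith)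
    (lf_intab hx0.le (by linarith) (by linarith) (by linarith))
    (fun t ht => lf_mono hx0 ht.1.le (by linarith [ht.2]))
  rw [show x + 1/N - x = 1/N by ring] at hc
  rw [hd]
  have h2 := mul_le_mul_of_nonneg_left hc hN0.le
  calc lf x = (N:ℝ) * (1/N * lf x) := by field_simp
    _ ≤ N * ∫ t in x..(x + 1/N), lf t := h2

lemma step_downR {x : ℝ} (hx : 1/2 ≤ x) (hx1 : x + 1/N < 1) :
    lf (x + 1/N) ≤ N * (Fp (x + 1/N) - Fp x) := by
  have hNe : (N:ℝ) ≠ 0 := ne_of_gt hN0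
  have h1N : (0:ℝ) < 1/N := by positivity
  have hd : Fp (x + 1/N) - Fp x = ∫ t in x..(x + 1/N), lf t :=
    Fp_diff (by linarith) (by linarith) (by linarith)
  have hc := c_le_int (a := x) (b := x + 1/N) (c := lf (x + 1/N)) (by linarith)
    (lf_intab (by linarith) (by linarith) (by linarith) (by linarith))
    (fun t ht => lf_anti (by linarith [ht.1]) ht.2.le hx1)
  rw [show x + 1/N - x = 1/N by ring] at hc
  rw [hd]
  have h2 := mul_le_mul_of_nonneg_left hc hN0.le
  calc lf (x + 1/N) = (N:ℝ) * (1/N * lf (x + 1/N)) := by field_simp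
    _ ≤ N * ∫ t in x..(x + 1/N), lf t := h2

lemma step_lowI {x : ℝ} (hx0 : 0 ≤ x) (hx : x + 1/N ≤ 1/2) :
    N * (Fp (x + 1/N) - Fp x) ≤ lf (x + 1/N) := by
  have hNe : (N:ℝ) ≠ 0 := ne_of_gt hN0
  have h1N : (0:ℝ) < 1/N := by positivity
  have hd : Fp (x + 1/N) - Fp x = ∫ t in x..(x + 1/N), lf t :=
    Fp_diff hx0 (by linarith) (by linarith)
  have hc := int_le_c (a := x) (b := x + 1/N) (c := lf (x + 1/N)) (by linarith)
    (lf_intab hx0 (by linarith) (by linarith) (by linarith))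
    (fun t ht => lf_mono (by linarith [ht.1]) ht.2.le hx)
  rw [show x + 1/N - x = 1/N by ring] at hc
  rw [hd]
  have h2 := mul_le_mul_of_nonneg_left hc hN0.le
  calc (N:ℝ) * ∫ t in x..(x + 1/N), lf t ≤ N * (1/N * lf (x + 1/N)) := h2
    _ = lf (x + 1/N) := by field_simp

lemma step_lowD {x : ℝ} (hx : 1/2 ≤ x) (hx1 : x + 1/N ≤ 1) :
    N * (Fp (x + 1/N) - Fp x) ≤ lf x := by
  have hNe : (N:ℝ) ≠ 0 := ne_of_gt hN0
  have h1N : (0:ℝ) < 1/N := by positivity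
  have hd : Fp (x + 1/N) - Fp x = ∫ t in x..(x + 1/N), lf t :=
    Fp_diff (by linarith) (by linarith) (by linarith)
  have hc := int_le_c (a := x) (b := x + 1/N) (c := lf x) (by linarith)
    (lf_intab (by linarith) (by linarith) (by linarith) hx1)
    (fun t ht => lf_anti hx ht.1.le (by linarith [ht.2]))
  rw [show x + 1/N - x = 1/N by ring] at hc
  rw [hd]
  have h2 := mul_le_mul_of_nonneg_left hc hN0.le
  calc (N:ℝ) * ∫ t in x..(x + 1/N), lf t ≤ N * (1/N * lf x) := h2
    _ = lf x := by field_simp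

lemma step_log2 {x : ℝ} (hx0 : 0 ≤ x) (hx1 : x + 1/N ≤ 1) :
    N * (Fp (x + 1/N) - Fp x) ≤ Real.log 2 := by
  have hNe : (N:ℝ) ≠ 0 := ne_of_gt hN0
  have h1N : (0:ℝ) < 1/N := by positivity
  have hd : Fp (x + 1/N) - Fp x = ∫ t in x..(x + 1/N), lf t :=
    Fp_diff hx0 (by linarith) (by linarith)
  have hc := int_le_c (a := x) (b := x + 1/N) (c := Real.log 2) (by linarith)
    (lf_intab hx0 (by linarith) (by linarith) hx1)
    (fun t _ => lf_le_log2)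
  rw [show x + 1/N - x = 1/N by ring] at hc
  rw [hd]
  have h2 := mul_le_mul_of_nonneg_left hc hN0.le
  calc (N:ℝ) * ∫ t in x..(x + 1/N), lf t ≤ N * (1/N * Real.log 2) := h2
    _ = Real.log 2 := by field_simp

lemma step_mid {x : ℝ} (hx0 : 1/6 ≤ x) (hx1 : x + 1/N ≤ 5/6) :
    0 ≤ Fp (x + 1/N) - Fp x := by
  have h1N : (0:ℝ) < 1/N := by positivity
  have hd : Fp (x + 1/N) - Fp x = ∫ t in x..(x + 1/N), lf t :=
    Fp_diff (by linarith) (by linarith) (by linarith)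
  have hc := c_le_int (a := x) (b := x + 1/N) (c := 0) (by linarith)
    (lf_intab (by linarith) (by linarith) (by linarith) (by linarith))
    (fun t ht => lf_nonneg (by linarith [ht.1]) (by linarith [ht.2]))
  rw [hd]
  nlinarith [hc]

end Steps

noncomputable def Sm (N m : ℕ) : ℝ := ∑ j ∈ Finset.Icc 1 m, lf (j / N)

lemma Sm_succ (N m : ℕ) : Sm N (m+1) = Sm N m + lf ((m+1 : ℕ) / N) := by
  unfold Sm
  rw [Finset.sum_Icc_succ_top (by omega : 1 ≤ m+1)]

section Main

variable {N : ℕ}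

lemma div_le_frac {a p q : ℕ} (hN0 : (0:ℝ) < N) (hq : 0 < q) (h : q * a ≤ p * N) :
    (a : ℝ) / N ≤ (p:ℝ) / (q:ℝ) := by
  have hq' : (0:ℝ) < q := by exact_mod_cast hq
  rw [div_le_div_iff₀ hN0 hq']
  have h2 : ((q*a : ℕ) : ℝ) ≤ ((p*N : ℕ):ℝ) := Nat.cast_le.2 h
  push_cast at h2
  nlinarith

lemma frac_le_div {a p q : ℕ} (hN0 : (0:ℝ) < N) (hq : 0 < q) (h : p * N ≤ q * a) :
    (p:ℝ) / (q:ℝ) ≤ (a : ℝ) / N := by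
  have hq' : (0:ℝ) < q := by exact_mod_cast hq
  rw [div_le_div_iff₀ hq' hN0]
  have h2 : ((p*N : ℕ) : ℝ) ≤ ((q*a : ℕ):ℝ) := Nat.cast_le.2 h
  push_cast at h2
  nlinarith

variable (hN : 12 ≤ N)
include hN

lemma upA : ∀ m, m ≤ N/2 - 1 → Sm N m ≤ N * (Fp (((m:ℝ)+1)/N) - Fp (1/N)) := by
  have hN0 : (0:ℝ) < N := by exact_mod_cast (by omega : 0 < N)
  intro m
  induction m with
  | zero =>
    intro _
    have h0 : Sm N 0 = 0 := by unfold Sm; rw [Finset.Icc_eq_empty (by omega : ¬ (1 ≤ 0))]; simp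
    rw [h0]
    simp only [Nat.cast_zero, zero_add, sub_self, mul_zero, le_refl]
  | succ m ih =>
    intro hm
    have h1 := ih (by omega)
    rw [Sm_succ]
    have hx0 : (0:ℝ) < ((m:ℝ)+1)/N := by positivity
    have hxh : ((m:ℝ)+1)/N + 1/N ≤ 1/2 := by
      have h3 := div_le_frac (N := N) (a := m+2) (p := 1) (q := 2) hN0 (by norm_num) (by omega)
      push_cast at h3
      rw [← add_div, show ((m:ℝ)+1)+1 = (m:ℝ)+2 from by ring]
      linarith
    have hstep := step_upR hN0 hx0 hxh
    rw [← add_div] at hstep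
    push_cast at h1 hstep ⊢
    ring_nf at h1 hstep ⊢
    linarith

lemma upB1 : ∀ i, i ≤ 3 →
    Sm N (N/2 - 1 + i) ≤ N * (Fp (((N/2 - 1 + i : ℕ):ℝ)/N) - Fp (1/N))
      + (1 + (i:ℝ)) * Real.log 2 := by
  have hN0 : (0:ℝ) < N := by exact_mod_cast (by omega : 0 < N)
  intro i
  induction i with
  | zero =>
    intro _
    have hA := upA hN (N/2 - 1) le_rfl
    have hs := step_log2 (N := N) hN0 (x := ((N/2 - 1 : ℕ):ℝ)/N) (by positivity)
      (by
        have h3 := div_le_frac (N := N) (a := N/2 - 1 + 1) (p := 1) (q := 1) hN0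
          (by norm_num) (by omega)
        push_cast at h3
        rw [← add_div]
        linarith)
    rw [← add_div] at hs
    simp only [Nat.add_zero, Nat.cast_zero]
    push_cast at hA hs ⊢
    nlinarith [log2_nonneg]
  | succ i ih =>
    intro hi
    have hprev := ih (by omega)
    rw [show N/2 - 1 + (i+1) = (N/2 - 1 + i) + 1 by omega, Sm_succ]
    have hmid := step_mid (N := N) hN0 (x := ((N/2 - 1 + i : ℕ):ℝ)/N)
      (by
        have h3 := frac_le_div (N := N) (a := N/2 - 1 + i) (p := 1) (q := 6) hN0
          (by norm_num) (by omega)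
        push_cast at h3 ⊢
        linarith)
      (by
        have h3 := div_le_frac (N := N) (a := N/2 - 1 + i + 1) (p := 5) (q := 6) hN0
          (by norm_num) (by omega)
        push_cast at h3 ⊢
        rw [← add_div]
        linarith)
    rw [← add_div] at hmid
    have hlog : lf ((((N/2 - 1 + i) + 1 : ℕ)) / N) ≤ Real.log 2 := lf_le_log2
    push_cast at hprev hmid hlog ⊢
    ring_nf at hprev hmid hlog ⊢
    nlinarith [log2_nonneg]

lemma upC : ∀ m, N/2 + 2 ≤ m → m ≤ N - 1 →
    Sm N m ≤ N * (Fp ((m:ℝ)/N) - Fp (1/N)) + 4 * Real.log 2 := by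
  have hN0 : (0:ℝ) < N := by exact_mod_cast (by omega : 0 < N)
  refine Nat.le_induction ?_ ?_
  · intro _
    have h1 := upB1 hN 3 le_rfl
    rw [show N/2 - 1 + 3 = N/2 + 2 by omega] at h1
    push_cast at h1 ⊢
    linarith
  · intro m hm ih hm2
    have hprev := ih (by omega)
    rw [Sm_succ]
    have hstep := step_downR (N := N) hN0 (x := ((m:ℕ):ℝ)/N)
      (by
        have h3 := frac_le_div (N := N) (a := m) (p := 1) (q := 2) hN0 (by norm_num) (by omega)
        push_cast at h3
        linarith)
      (by
        have h3 : ((m+1:ℕ):ℝ) < (N:ℝ) := by exact_mod_cast Nat.cast_lt.2 (by omega : m + 1 < N)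
        push_cast at h3
        rw [← add_div, div_lt_one hN0]
        linarith)
    rw [← add_div] at hstep
    push_cast at hprev hstep ⊢
    ring_nf at hprev hstep ⊢
    linarith

lemma upper_final (m : ℕ) (hm : m ≤ N - 1) :
    Sm N m ≤ N * (Fp (5/6) - Fp (1/N)) + 4 * Real.log 2 := by
  have hN0 : (0:ℝ) < N := by exact_mod_cast (by omega : 0 < N)
  rcases le_or_gt m (N/2 - 1) with h | h
  · have h1 := upA hN m h
    have h2 : Fp (((m:ℝ)+1)/N) ≤ Fp (5/6) := by
      apply Fmax (by positivity)
      have h3 := div_le_frac (N := N) (a := m+1) (p := 1) (q := 1) hN0 (by norm_num) (by omega)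
      push_cast at h3
      linarith
    nlinarith [log2_nonneg, mul_le_mul_of_nonneg_left h2 hN0.le]
  · have h2 : Fp ((m:ℝ)/N) ≤ Fp (5/6) := by
      apply Fmax (by positivity)
      have h3 := div_le_frac (N := N) (a := m) (p := 1) (q := 1) hN0 (by norm_num) (by omega)
      push_cast at h3
      linarith
    rcases le_or_gt m (N/2 + 2) with h4 | h4
    · have h5 := upB1 hN (m - (N/2 - 1)) (by omega)
      rw [show N/2 - 1 + (m - (N/2 - 1)) = m by omega] at h5
      have h6 : ((m - (N/2 - 1) : ℕ) : ℝ) ≤ 3 := by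
        exact_mod_cast Nat.cast_le.2 (by omega : m - (N/2-1) ≤ 3)
      nlinarith [log2_nonneg, mul_le_mul_of_nonneg_left h2 hN0.le]
    · have h5 := upC hN m (by omega) hm
      nlinarith [mul_le_mul_of_nonneg_left h2 hN0.le]

lemma lowA : ∀ m, m ≤ N/2 → N * Fp ((m:ℝ)/N) ≤ Sm N m := by
  have hN0 : (0:ℝ) < N := by exact_mod_cast (by omega : 0 < N)
  intro m
  induction m with
  | zero =>
    intro _
    have h0 : Sm N 0 = 0 := by unfold Sm; rw [Finset.Icc_eq_empty (by omega : ¬ (1 ≤ 0))]; simp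
    rw [h0]
    simp only [Nat.cast_zero, zero_div, Fp_zero, mul_zero, le_refl]
  | succ m ih =>
    intro hm
    have h1 := ih (by omega)
    rw [Sm_succ]
    have hstep := step_lowI (N := N) hN0 (x := ((m:ℕ):ℝ)/N) (by positivity)
      (by
        have h3 := div_le_frac (N := N) (a := m+1) (p := 1) (q := 2) hN0 (by norm_num) (by omega)
        push_cast at h3
        rw [← add_div]
        linarith)
    rw [← add_div] at hstep
    push_cast at h1 hstep ⊢
    ring_nf at h1 hstep ⊢
    linarith

lemma lowB : ∀ m, N/2 ≤ m → m ≤ N - 1 →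
    N * Fp (((m:ℝ)+1)/N) - Real.log 2 ≤ Sm N m := by
  have hN0 : (0:ℝ) < N := by exact_mod_cast (by omega : 0 < N)
  refine Nat.le_induction ?_ ?_
  · intro _
    have h1 := lowA hN (N/2) le_rfl
    have hs := step_log2 (N := N) hN0 (x := ((N/2 : ℕ):ℝ)/N) (by positivity)
      (by
        have h3 := div_le_frac (N := N) (a := N/2 + 1) (p := 1) (q := 1) hN0
          (by norm_num) (by omega)
        push_cast at h3
        rw [← add_div]
        linarith)
    rw [← add_div] at hs
    push_cast at h1 hs ⊢
    linarith
  · intro m hm ih hm2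
    have hprev := ih (by omega)
    rw [Sm_succ]
    have hstep := step_lowD (N := N) hN0 (x := (((m:ℕ):ℝ)+1)/N)
      (by
        have h3 := frac_le_div (N := N) (a := m+1) (p := 1) (q := 2) hN0 (by norm_num) (by omega)
        push_cast at h3
        linarith)
      (by
        have h3 := div_le_frac (N := N) (a := m+2) (p := 1) (q := 1) hN0 (by norm_num) (by omega)
        push_cast at h3
        rw [← add_div, show ((m:ℝ)+1)+1 = (m:ℝ)+2 from by ring]
        linarith)
    rw [← add_div] at hstep
    push_cast at hprev hstep ⊢
    ring_nf at hprev hstep ⊢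
    linarith

lemma lower_final :
    N * Fp ((((5*N/6 : ℕ):ℝ)+1)/N) - Real.log 2 ≤ Sm N (5*N/6) :=
  lowB hN (5*N/6) (by omega) (by omega)

end Main

lemma Fp_contOn : ContinuousOn Fp (Set.Icc 0 1) := by
  have h : IntegrableOn lf (Set.uIcc 0 1) volume := by
    rw [Set.uIcc_of_le (by norm_num : (0:ℝ) ≤ 1),
      integrableOn_Icc_iff_integrableOn_Ioc]
    exact lf_int01
  have h2 := intervalIntegral.continuousOn_primitive_interval (a := (0:ℝ)) (b := 1)
    (μ := volume) h
  rw [Set.uIcc_of_le (by norm_num : (0:ℝ) ≤ 1)] at h2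
  exact h2

lemma sup_eq (N : ℕ) (hN : 2 ≤ N) :
    Real.log (⨆ m : Fin N, ∏ j ∈ Finset.Icc 1 (m : ℕ), 4 * Real.sin (π * j / N) ^ 2)
      = 2 * ⨆ m : Fin N, Sm N (m : ℕ) := by
  have hNe : Nonempty (Fin N) := ⟨⟨0, by omega⟩⟩
  have hN0 : (0:ℝ) < N := by exact_mod_cast (by omega : 0 < N)
  have hP : ∀ m : Fin N, (∏ j ∈ Finset.Icc 1 (m : ℕ), 4 * Real.sin (π * j / N) ^ 2)
      = Real.exp (2 * Sm N (m : ℕ)) := by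
    intro m
    have hfac : ∀ j ∈ Finset.Icc 1 (m:ℕ), 4 * Real.sin (π * j / N) ^ 2
        = Real.exp (2 * lf ((j:ℝ) / N)) := by
      intro j hj
      simp only [Finset.mem_Icc] at hj
      have hjN' : j < N := by have := m.2; omega
      have hj1 : (1:ℝ) ≤ j := by exact_mod_cast hj.1
      have hjN : (j:ℝ) < N := by exact_mod_cast hjN'
      have ht0 : (0:ℝ) < (j:ℝ)/N := by positivity
      have ht1 : (j:ℝ)/N < 1 := (div_lt_one hN0).2 hjN
      have hpos : (0:ℝ) < 2 * Real.sin (π * ((j:ℝ) / N)) := by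
        have := sin_pos01 ht0 ht1; linarith
      rw [show π * (j:ℝ) / N = π * ((j:ℝ)/N) from by ring,
        show (4:ℝ) * Real.sin (π * ((j:ℝ)/N)) ^ 2
          = (2 * Real.sin (π * ((j:ℝ)/N)))^2 from by ring,
        ← Real.exp_log hpos, ← Real.exp_nat_mul]
      norm_num [lf]
    rw [Finset.prod_congr rfl hfac, ← Real.exp_sum]
    congr 1
    unfold Sm
    rw [Finset.mul_sum]
  obtain ⟨m0, hm0⟩ := Finite.exists_max (fun m : Fin N => Sm N (m : ℕ))
  have hbddS : BddAbove (Set.range fun m : Fin N => Sm N (m:ℕ)) :=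
    Set.Finite.bddAbove (Set.finite_range _)
  have hbddP : BddAbove (Set.range fun m : Fin N =>
      ∏ j ∈ Finset.Icc 1 (m : ℕ), 4 * Real.sin (π * j / N) ^ 2) :=
    Set.Finite.bddAbove (Set.finite_range _)
  have h1 : (⨆ m : Fin N, Sm N (m:ℕ)) = Sm N (m0:ℕ) :=
    le_antisymm (ciSup_le hm0) (le_ciSup hbddS m0)
  have h2 : (⨆ m : Fin N, ∏ j ∈ Finset.Icc 1 (m : ℕ), 4 * Real.sin (π * j / N) ^ 2)
      = Real.exp (2 * Sm N (m0:ℕ)) := by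
    refine le_antisymm (ciSup_le fun m => ?_) ?_
    · rw [hP m]; exact Real.exp_le_exp.2 (by linarith [hm0 m])
    · rw [← hP m0]; exact le_ciSup hbddP m0
  rw [h2, Real.log_exp, h1]

theorem stmt7 :
    Filter.Tendsto
      (fun N : ℕ => (1 / (N : ℝ)) *
        Real.log (⨆ m : Fin N,
          ∏ j ∈ Finset.Icc 1 (m : ℕ), 4 * Real.sin (Real.pi * j / N) ^ 2))
      Filter.atTop
      (nhds (2 * ∫ t in (0 : ℝ)..(5 / 6 : ℝ), Real.log (2 * Real.sin (Real.pi * t)))) := by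
  have hm6 : Tendsto (fun N : ℕ => (((5*N/6 : ℕ):ℝ)+1)/(N:ℝ)) atTop (nhds (5/6)) := by
    have h56 : Tendsto (fun N : ℕ => 5/6 + 1/(N:ℝ)) atTop (nhds (5/6)) := by
      have h0 := tendsto_one_div_atTop_nhds_zero_nat (𝕜 := ℝ)
      have hc := tendsto_const_nhds (x := (5/6:ℝ)) (f := atTop (α := ℕ))
      simpa using hc.add h0
    refine tendsto_of_tendsto_of_tendsto_of_le_of_le'
      (tendsto_const_nhds (x := (5/6:ℝ))) h56 ?_ ?_
    · filter_upwards [eventually_ge_atTop 1] with N hN1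
      have hN0 : (0:ℝ) < N := by exact_mod_cast (by omega : 0 < N)
      have h3 := frac_le_div (N := N) (a := 5*N/6 + 1) (p := 5) (q := 6) hN0
        (by norm_num) (by omega)
      push_cast at h3 ⊢
      linarith
    · filter_upwards [eventually_ge_atTop 1] with N hN1
      have hN0 : (0:ℝ) < N := by exact_mod_cast (by omega : 0 < N)
      have h3 := div_le_frac (N := N) (a := 5*N/6) (p := 5) (q := 6) hN0
        (by norm_num) (by omega)
      push_cast at h3 ⊢
      rw [add_div]
      linarith
  have hmem : ∀ᶠ N : ℕ in atTop, (((5*N/6 : ℕ):ℝ)+1)/(N:ℝ) ∈ Set.Icc (0:ℝ) 1 := by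
    filter_upwards [eventually_ge_atTop 6] with N h6
    have hN0 : (0:ℝ) < N := by exact_mod_cast (by omega : 0 < N)
    constructor
    · positivity
    · have h3 := div_le_frac (N := N) (a := 5*N/6 + 1) (p := 1) (q := 1) hN0
        (by norm_num) (by omega)
      push_cast at h3
      linarith
  have hm6' : Tendsto (fun N : ℕ => (((5*N/6 : ℕ):ℝ)+1)/(N:ℝ)) atTop
      (nhdsWithin (5/6) (Set.Icc 0 1)) :=
    tendsto_nhdsWithin_of_tendsto_nhds_of_eventually_within _ hm6 hmem
  have hFu : Tendsto (fun N : ℕ => Fp ((((5*N/6:ℕ):ℝ)+1)/(N:ℝ))) atTop (nhds (Fp (5/6))) :=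
    ((Fp_contOn (5/6) ⟨by norm_num, by norm_num⟩).tendsto).comp hm6'
  have h1N : Tendsto (fun N : ℕ => Fp (1/(N:ℝ))) atTop (nhds 0) := by
    have hseq : Tendsto (fun N : ℕ => 1/(N:ℝ)) atTop (nhdsWithin 0 (Set.Icc 0 1)) := by
      refine tendsto_nhdsWithin_of_tendsto_nhds_of_eventually_within _
        tendsto_one_div_atTop_nhds_zero_nat ?_
      filter_upwards [eventually_ge_atTop 1] with N h1
      have hN0 : (0:ℝ) < N := by exact_mod_cast (by omega : 0 < N)
      have hN1 : (1:ℝ) ≤ N := by exact_mod_cast h1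
      constructor
      · positivity
      · rw [div_le_one hN0]; exact hN1
    have hcomp := ((Fp_contOn 0 ⟨le_rfl, by norm_num⟩).tendsto).comp hseq
    rwa [Fp_zero] at hcomp
  have hlog2N : Tendsto (fun N : ℕ => Real.log 2/(N:ℝ)) atTop (nhds 0) :=
    tendsto_const_div_atTop_nhds_zero_nat _
  have hlo : Tendsto (fun N : ℕ => 2 * Fp ((((5*N/6:ℕ):ℝ)+1)/(N:ℝ)) - 2 * (Real.log 2/(N:ℝ)))
      atTop (nhds (2 * Fp (5/6))) := by
    have h := (hFu.const_mul 2).sub (hlog2N.const_mul 2)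
    simpa using h
  have hhi : Tendsto
      (fun N : ℕ => 2 * Fp (5/6) - 2 * Fp (1/(N:ℝ)) + 8 * (Real.log 2/(N:ℝ)))
      atTop (nhds (2 * Fp (5/6))) := by
    have h := ((tendsto_const_nhds (x := 2 * Fp (5/6)) (f := atTop (α := ℕ))).sub
      (h1N.const_mul 2)).add (hlog2N.const_mul 8)
    simpa using h
  have hkey : Filter.Tendsto
      (fun N : ℕ => (1 / (N : ℝ)) *
        Real.log (⨆ m : Fin N,
          ∏ j ∈ Finset.Icc 1 (m : ℕ), 4 * Real.sin (Real.pi * j / N) ^ 2))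
      Filter.atTop (nhds (2 * Fp (5/6))) := by
    refine tendsto_of_tendsto_of_tendsto_of_le_of_le' hlo hhi ?_ ?_
    · filter_upwards [eventually_ge_atTop 12] with N h12
      have hN0 : (0:ℝ) < N := by exact_mod_cast (by omega : 0 < N)
      have hNe : (N:ℝ) ≠ 0 := ne_of_gt hN0
      haveI : Nonempty (Fin N) := ⟨⟨0, by omega⟩⟩
      rw [sup_eq N (by omega)]
      have hlow := lower_final (N := N) h12
      have hle : Sm N (5*N/6) ≤ ⨆ m : Fin N, Sm N (m : ℕ) := by
        have h := le_ciSup (f := fun m : Fin N => Sm N (m:ℕ))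
          (Set.Finite.bddAbove (Set.finite_range _)) (⟨5*N/6, by omega⟩ : Fin N)
        simpa using h
      have h2' : 2*((N:ℝ)*Fp ((((5*N/6:ℕ):ℝ)+1)/(N:ℝ)) - Real.log 2)
          ≤ 2 * ⨆ m : Fin N, Sm N (m : ℕ) := by linarith
      have h3 := mul_le_mul_of_nonneg_left h2' (by positivity : (0:ℝ) ≤ 1/(N:ℝ))
      calc 2 * Fp ((((5*N/6:ℕ):ℝ)+1)/(N:ℝ)) - 2*(Real.log 2/(N:ℝ))
          = (1/(N:ℝ))*(2*((N:ℝ)*Fp ((((5*N/6:ℕ):ℝ)+1)/(N:ℝ)) - Real.log 2)) := by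
            field_simp
        _ ≤ (1/(N:ℝ))*(2 * ⨆ m : Fin N, Sm N (m : ℕ)) := h3
    · filter_upwards [eventually_ge_atTop 12] with N h12
      have hN0 : (0:ℝ) < N := by exact_mod_cast (by omega : 0 < N)
      have hNe : (N:ℝ) ≠ 0 := ne_of_gt hN0
      haveI : Nonempty (Fin N) := ⟨⟨0, by omega⟩⟩
      rw [sup_eq N (by omega)]
      have hup : (⨆ m : Fin N, Sm N (m : ℕ)) ≤ (N:ℝ)*(Fp (5/6) - Fp (1/(N:ℝ))) + 4*Real.log 2 := by
        refine ciSup_le fun m => ?_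
        exact upper_final h12 (m:ℕ) (by have := m.2; omega)
      have h2' : 2 * (⨆ m : Fin N, Sm N (m : ℕ))
          ≤ 2*((N:ℝ)*(Fp (5/6) - Fp (1/(N:ℝ))) + 4*Real.log 2) := by linarith
      have h3 := mul_le_mul_of_nonneg_left h2' (by positivity : (0:ℝ) ≤ 1/(N:ℝ))
      calc (1/(N:ℝ))*(2 * ⨆ m : Fin N, Sm N (m : ℕ))
          ≤ (1/(N:ℝ))*(2*((N:ℝ)*(Fp (5/6) - Fp (1/(N:ℝ))) + 4*Real.log 2)) := h3
        _ = 2 * Fp (5/6) - 2 * Fp (1/(N:ℝ)) + 8 * (Real.log 2/(N:ℝ)) := by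
            field_simp; ring
  have hF : Fp (5/6) = ∫ t in (0 : ℝ)..(5 / 6 : ℝ), Real.log (2 * Real.sin (Real.pi * t)) := rfl
  rwa [hF] at hkey
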